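/- Let ρ be a density matrix on ℂ^{d_S} with spectral decomposition ρ = Σ_j r_j |r_j⟩⟨r_j|, r_1 ≥ r_2 ≥ ... ≥ r_{d_S}. Then the ergotropy satisfies ℰ(ρ) = max over unitaries U of (Tr(H_S ρ) − Tr(H_S U ρ U†)) = Σ_{k,j} r_j (|⟨ε_k|r_j⟩|² − δ_{jk}) ε_k ≥ 0, and the maximum is attained by any unitary of the form U = Σ_k e^{iφ_k} |ε_k⟩⟨r_k|. -/
import Mathlib


open Matrix BigOperators Finset Kronecker
open scoped ComplexOrder

noncomputable section

namespace Daemonic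

/-- The outer product `|x⟩⟨y|` as a matrix. -/
def ketbra {ι : Type*} [Fintype ι] (x y : ι → ℂ) : Matrix ι ι ℂ :=
  Matrix.vecMulVec x (star y)

/-- A family of vectors is orthonormal. -/
def ONFam {ι κ : Type*} [Fintype ι] [DecidableEq κ] (v : κ → ι → ℂ) : Prop :=
  ∀ i j, star (v i) ⬝ᵥ v j = if i = j then 1 else 0

/-- A density matrix: positive semidefinite with unit trace. -/
def IsDensity {ι : Type*} [Fintype ι] (ρ : Matrix ι ι ℂ) : Prop :=
  ρ.PosSemidef ∧ ρ.trace = 1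

/-- The matrix element `⟨x|M|y⟩`. -/
def matElem {ι : Type*} [Fintype ι] (M : Matrix ι ι ℂ) (x y : ι → ℂ) : ℂ :=
  star x ⬝ᵥ (M *ᵥ y)

/-- The Hamiltonian `H_S = ∑ₖ εₖ |εₖ⟩⟨εₖ|`. -/
def ham {n : ℕ} (ε : Fin n → ℝ) (v : Fin n → Fin n → ℂ) : Matrix (Fin n) (Fin n) ℂ :=
  ∑ k, (ε k : ℂ) • ketbra (v k) (v k)

/-- `e^{t H_S} = ∑ₖ e^{t εₖ} |εₖ⟩⟨εₖ|` (functional calculus in the eigenbasis of `H_S`). -/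
def expHam {n : ℕ} (ε : Fin n → ℝ) (v : Fin n → Fin n → ℂ) (t : ℝ) :
    Matrix (Fin n) (Fin n) ℂ :=
  ∑ k, (Real.exp (t * ε k) : ℂ) • ketbra (v k) (v k)

/-- The expected utility `⟨u(w)⟩_{ρ,U}` for quasiprobability parameter `q`,
with respect to the eigenvalues `ε` and orthonormal eigenvectors `v` of `H_S`. -/
def expUtil {n : ℕ} (u : ℝ → ℝ) (q : ℝ) (ε : Fin n → ℝ) (v : Fin n → Fin n → ℂ)
    (ρ U : Matrix (Fin n) (Fin n) ℂ) : ℝ :=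
  ∑ i, ∑ j, ∑ k,
    (matElem ρ (v i) (v j) * matElem Uᴴ (v j) (v k) * matElem U (v k) (v i)).re *
      u (q * ε i + (1 - q) * ε j - ε k)

/-- The optimal expected utility `𝓤(ρ) = max over unitaries U of ⟨u(w)⟩_{ρ,U}`. -/
def optUtil {n : ℕ} (u : ℝ → ℝ) (q : ℝ) (ε : Fin n → ℝ) (v : Fin n → Fin n → ℂ)
    (ρ : Matrix (Fin n) (Fin n) ℂ) : ℝ :=
  ⨆ U : Matrix.unitaryGroup (Fin n) ℂ, expUtil u q ε v ρ (U : Matrix (Fin n) (Fin n) ℂ)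

/-- The exponential utility `u(w) = (1 - e^{-r w})/r`. -/
def expUtility (r : ℝ) : ℝ → ℝ := fun w => (1 - Real.exp (-r * w)) / r

/-- The partial trace over the ancilla. -/
def ptraceA {dS dA : ℕ} (ρSA : Matrix (Fin dS × Fin dA) (Fin dS × Fin dA) ℂ) :
    Matrix (Fin dS) (Fin dS) ℂ :=
  Matrix.of fun i j => ∑ a, ρSA (i, a) (j, a)

/-- The unnormalized conditional state `Tr_A((I ⊗ Π_a) ρ_SA (I ⊗ Π_a))`, where
`Π_a = |a⟩⟨a|` projects onto the vector `w a` of an orthonormal basis `w` of the ancilla. -/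
def condUnnorm {dS dA : ℕ} (w : Fin dA → Fin dA → ℂ)
    (ρSA : Matrix (Fin dS × Fin dA) (Fin dS × Fin dA) ℂ) (a : Fin dA) :
    Matrix (Fin dS) (Fin dS) ℂ :=
  Matrix.of fun i j => ∑ c, ∑ d, ρSA (i, c) (j, d) * (w a d * star (w a c))

/-- The outcome probability `p_a = Tr((I ⊗ Π_a) ρ_SA)`. -/
def prob {dS dA : ℕ} (w : Fin dA → Fin dA → ℂ)
    (ρSA : Matrix (Fin dS × Fin dA) (Fin dS × Fin dA) ℂ) (a : Fin dA) : ℝ :=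
  ((condUnnorm w ρSA a).trace).re

/-- The conditional state `ρ_{S|a}`. -/
def condState {dS dA : ℕ} (w : Fin dA → Fin dA → ℂ)
    (ρSA : Matrix (Fin dS × Fin dA) (Fin dS × Fin dA) ℂ) (a : Fin dA) :
    Matrix (Fin dS) (Fin dS) ℂ :=
  ((prob w ρSA a : ℂ))⁻¹ • condUnnorm w ρSA a

/-- The daemonic expected utility `𝓤_{{Π_a}}(ρ_SA) = ∑_a p_a 𝓤(ρ_{S|a})`. -/
def daemonicUtil {dS dA : ℕ} (u : ℝ → ℝ) (q : ℝ) (ε : Fin dS → ℝ)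
    (v : Fin dS → Fin dS → ℂ) (w : Fin dA → Fin dA → ℂ)
    (ρSA : Matrix (Fin dS × Fin dA) (Fin dS × Fin dA) ℂ) : ℝ :=
  ∑ a, prob w ρSA a * optUtil u q ε v (condState w ρSA a)

/-- The maximum daemonic gain `δ𝓤(ρ_SA)`, maximizing over all orthonormal bases of the
ancilla (equivalently, over the rows of all unitary matrices). -/
def daemonicGain {dS dA : ℕ} (u : ℝ → ℝ) (q : ℝ) (ε : Fin dS → ℝ)
    (v : Fin dS → Fin dS → ℂ)
    (ρSA : Matrix (Fin dS × Fin dA) (Fin dS × Fin dA) ℂ) : ℝ :=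
  (⨆ V : Matrix.unitaryGroup (Fin dA) ℂ,
      daemonicUtil u q ε v (fun a => (V : Matrix (Fin dA) (Fin dA) ℂ) a) ρSA) -
    optUtil u q ε v (ptraceA ρSA)

/-- The ergotropy of a (possibly unnormalized) state `σ` with respect to a Hamiltonian `H`:
`ℰ_H(σ) = max over unitaries U of (Tr(Hσ) - Tr(H U σ U†))`. -/
def ergotropyH {n : ℕ} (H σ : Matrix (Fin n) (Fin n) ℂ) : ℝ :=
  ⨆ U : Matrix.unitaryGroup (Fin n) ℂ,
    ((H * σ).trace -
      (H * ((U : Matrix (Fin n) (Fin n) ℂ) * σ * (U : Matrix (Fin n) (Fin n) ℂ)ᴴ)).trace).re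

/-- A separable bipartite state: a convex combination of product states. -/
def IsSeparable {dS dA : ℕ} (ρSA : Matrix (Fin dS × Fin dA) (Fin dS × Fin dA) ℂ) : Prop :=
  ∃ (m : ℕ) (p : Fin m → ℝ) (σ : Fin m → Matrix (Fin dS) (Fin dS) ℂ)
    (τ : Fin m → Matrix (Fin dA) (Fin dA) ℂ),
    (∀ k, 0 ≤ p k) ∧ (∑ k, p k = 1) ∧ (∀ k, IsDensity (σ k)) ∧ (∀ k, IsDensity (τ k)) ∧
    ρSA = ∑ k, (p k : ℂ) • (σ k ⊗ₖ τ k)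

/-- A classical-quantum state `ρ_SA = ∑ₖ pₖ Pₖ ⊗ ρᴬₖ` with `Pₖ` mutually orthogonal
rank-one projectors summing to the identity. -/
def IsClassicalQuantum {dS dA : ℕ}
    (ρSA : Matrix (Fin dS × Fin dA) (Fin dS × Fin dA) ℂ) : Prop :=
  ∃ (p : Fin dS → ℝ) (ψ : Fin dS → Fin dS → ℂ) (τ : Fin dS → Matrix (Fin dA) (Fin dA) ℂ),
    (∀ k, 0 ≤ p k) ∧ (∑ k, p k = 1) ∧ ONFam ψ ∧ (∀ k, IsDensity (τ k)) ∧
    ρSA = ∑ k, (p k : ℂ) • (ketbra (ψ k) (ψ k) ⊗ₖ τ k)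

/-- The dephasing map associated with an orthonormal basis `v`. -/
def dephase {n : ℕ} (v : Fin n → Fin n → ℂ) (ρ : Matrix (Fin n) (Fin n) ℂ) :
    Matrix (Fin n) (Fin n) ℂ :=
  ∑ k, ketbra (v k) (v k) * ρ * ketbra (v k) (v k)

section Aux
variable {n : ℕ}






lemma ketbra_mul_ketbra (x y z w : Fin n → ℂ) :
    ketbra x y * ketbra z w = (star y ⬝ᵥ z) • ketbra x w := by
  ext i j
  simp [ketbra, Matrix.mul_apply, vecMulVec_apply, dotProduct, Finset.sum_mul, Finset.mul_sum]
  ring_nf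
  exact Finset.sum_congr rfl fun m _ => by ring

lemma ketbra_conjT (x y : Fin n → ℂ) : (ketbra x y)ᴴ = ketbra y x := by
  ext i j
  simp [ketbra, conjTranspose_apply, vecMulVec_apply, mul_comm]

lemma mul_ketbra (M : Matrix (Fin n) (Fin n) ℂ) (x y : Fin n → ℂ) :
    M * ketbra x y = ketbra (M *ᵥ x) y := by
  ext i j
  simp [ketbra, Matrix.mul_apply, vecMulVec_apply, mulVec, dotProduct, Finset.sum_mul]
  exact Finset.sum_congr rfl fun m _ => by ring

lemma ketbra_mul (M : Matrix (Fin n) (Fin n) ℂ) (x y : Fin n → ℂ) :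
    ketbra x y * M = ketbra x (Mᴴ *ᵥ y) := by
  ext i j
  simp [ketbra, Matrix.mul_apply, vecMulVec_apply, mulVec, dotProduct, conjTranspose_apply,
    Finset.mul_sum]
  exact Finset.sum_congr rfl fun m _ => by ring

lemma trace_ketbra (x y : Fin n → ℂ) : (ketbra x y).trace = star y ⬝ᵥ x := by
  simp [ketbra, Matrix.trace, vecMulVec_apply, dotProduct, Matrix.diag, mul_comm]

lemma star_dot_comm (x y : Fin n → ℂ) :
    star x ⬝ᵥ y = starRingEnd ℂ (star y ⬝ᵥ x) := by
  simp [dotProduct, map_sum, mul_comm]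

/-- completeness -/
lemma onfam_complete {w : Fin n → Fin n → ℂ} (hw : ONFam w) :
    ∑ k, ketbra (w k) (w k) = 1 := by
  classical
  let M : Matrix (Fin n) (Fin n) ℂ := Matrix.of fun i k => w k i
  have h1 : Mᴴ * M = 1 := by
    ext k l
    simpa [Matrix.mul_apply, conjTranspose_apply, M, dotProduct, Matrix.one_apply] using hw k l
  have h2 : M * Mᴴ = 1 := mul_eq_one_comm.mp h1
  ext i j
  have := congrFun (congrFun h2 i) j
  simpa [Matrix.mul_apply, conjTranspose_apply, M, ketbra, vecMulVec_apply,
    Matrix.sum_apply] using this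



lemma ketbra_mulVec (x y z : Fin n → ℂ) : ketbra x y *ᵥ z = (star y ⬝ᵥ z) • x := by
  ext i
  simp [ketbra, mulVec, vecMulVec_apply, dotProduct, Finset.sum_mul]
  exact Finset.sum_congr rfl fun m _ => by ring

lemma dot_sum (x : Fin n → ℂ) (f : Fin n → Fin n → ℂ) :
    x ⬝ᵥ (∑ j, f j) = ∑ j, x ⬝ᵥ f j := by
  simp only [dotProduct, Finset.sum_apply, Finset.mul_sum]
  exact Finset.sum_comm

lemma sum_normSq_eq_one {v w : Fin n → Fin n → ℂ} (hv : ONFam v) (hw : ONFam w) (k : Fin n) :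
    ∑ j, Complex.normSq (star (v k) ⬝ᵥ w j) = 1 := by
  have hsum : (∑ j, ketbra (w j) (w j)) *ᵥ (v k) = ∑ j, (star (w j) ⬝ᵥ v k) • w j := by
    ext i
    simp only [mulVec, dotProduct, Matrix.sum_apply, Finset.sum_mul, Finset.sum_apply,
      Pi.smul_apply, smul_eq_mul, Finset.mul_sum]
    rw [Finset.sum_comm]
    refine Finset.sum_congr rfl fun j _ => Finset.sum_congr rfl fun m _ => ?_
    simp [ketbra, vecMulVec_apply]
    ring
  have h1 : ∑ j, (star (w j) ⬝ᵥ v k) • w j = v k := by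
    rw [← hsum, onfam_complete hw, one_mulVec]
  have key : ∑ j, (star (v k) ⬝ᵥ w j) * ((starRingEnd ℂ) (star (v k) ⬝ᵥ w j)) = 1 := by
    calc ∑ j, (star (v k) ⬝ᵥ w j) * ((starRingEnd ℂ) (star (v k) ⬝ᵥ w j))
        = ∑ j, star (v k) ⬝ᵥ ((star (w j) ⬝ᵥ v k) • w j) := by
          refine Finset.sum_congr rfl fun j _ => ?_
          rw [dotProduct_smul, ← star_dot_comm, smul_eq_mul]
          ring
      _ = star (v k) ⬝ᵥ (∑ j, (star (w j) ⬝ᵥ v k) • w j) := (dot_sum _ _).symm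
      _ = star (v k) ⬝ᵥ v k := by rw [h1]
      _ = 1 := by simpa using hv k k
  have := congrArg Complex.re key
  simpa [Complex.re_sum, Complex.mul_conj, Complex.normSq] using this

lemma onfam_mulVec {U : Matrix (Fin n) (Fin n) ℂ} (hU : U ∈ Matrix.unitaryGroup (Fin n) ℂ)
    {w : Fin n → Fin n → ℂ} (hw : ONFam w) : ONFam (fun j => U *ᵥ w j) := by
  intro i j
  have hU' : Uᴴ * U = 1 := by
    simpa [Matrix.star_eq_conjTranspose] using (Matrix.mem_unitaryGroup_iff'.mp hU)
  calc star (U *ᵥ w i) ⬝ᵥ (U *ᵥ w j)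
      = (star (w i) ᵥ* Uᴴ) ⬝ᵥ (U *ᵥ w j) := by rw [star_mulVec]
    _ = ((star (w i) ᵥ* Uᴴ) ᵥ* U) ⬝ᵥ (w j) := by rw [dotProduct_mulVec]
    _ = (star (w i) ᵥ* (Uᴴ * U)) ⬝ᵥ (w j) := by rw [vecMul_vecMul]
    _ = star (w i) ⬝ᵥ w j := by rw [hU', vecMul_one]
    _ = _ := hw i j

lemma ds_ineq (a b : Fin n → ℝ) (ha : Monotone a) (hb : Antitone b)
    (B : Matrix (Fin n) (Fin n) ℝ) (hB : B ∈ doublyStochastic ℝ (Fin n)) :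
    ∑ k, a k * b k ≤ ∑ k, ∑ j, B k j * (a k * b j) := by
  classical
  have hab : Antivary a b := by
    intro i j hb'
    rcases le_total j i with h | h
    · exact ha h
    · exact absurd (hb h) (not_le.mpr hb')
  set f : Matrix (Fin n) (Fin n) ℝ → ℝ := fun M => ∑ k, ∑ j, M k j * (a k * b j) with hf
  have hlin : IsLinearMap ℝ f := by
    constructor
    · intro M N
      simp [hf, add_mul, Finset.sum_add_distrib]
    · intro c M
      simp [hf, Finset.mul_sum, smul_eq_mul, mul_assoc]
  have hconv : Convex ℝ {M | ∑ k, a k * b k ≤ f M} := convex_halfSpace_ge hlin _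
  have hsub : {σ.permMatrix ℝ | σ : Equiv.Perm (Fin n)} ⊆ {M | ∑ k, a k * b k ≤ f M} := by
    rintro M ⟨σ, rfl⟩
    have hfσ : f (σ.permMatrix ℝ) = ∑ k, a k * b (σ k) := by
      simp [hf, Equiv.Perm.permMatrix, PEquiv.toMatrix_apply, Equiv.toPEquiv_apply,
        Option.some.injEq, ite_mul, Finset.sum_ite_eq]
    simpa [hfσ] using hab.sum_mul_le_sum_mul_comp_perm (σ := σ)
  have hB' : B ∈ convexHull ℝ {σ.permMatrix ℝ | σ : Equiv.Perm (Fin n)} := by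
    rwa [← doublyStochastic_eq_convexHull_permMatrix]
  exact convexHull_min hsub hconv hB'




lemma trace_ham_mix (ε r : Fin n → ℝ) (v w : Fin n → Fin n → ℂ) :
    ((ham ε v * ∑ j, (r j : ℂ) • ketbra (w j) (w j)).trace).re
      = ∑ k, ∑ j, ε k * r j * Complex.normSq (star (v k) ⬝ᵥ w j) := by
  have expand : ham ε v * (∑ j, (r j : ℂ) • ketbra (w j) (w j))
      = ∑ k, ∑ j, (((ε k : ℂ) * (r j : ℂ)) •
          (ketbra (v k) (v k) * ketbra (w j) (w j))) := by
    simp only [ham, Finset.sum_mul, Matrix.smul_mul, Finset.mul_sum, Matrix.mul_smul, smul_smul]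
    rw [Finset.sum_comm]
    simp only [mul_comm]
  rw [expand]
  rw [Matrix.trace_sum, Complex.re_sum]
  refine Finset.sum_congr rfl fun k _ => ?_
  rw [Matrix.trace_sum, Complex.re_sum]
  refine Finset.sum_congr rfl fun j _ => ?_
  rw [Matrix.trace_smul, ketbra_mul_ketbra, Matrix.trace_smul, trace_ketbra]
  rw [star_dot_comm (w j) (v k)]
  rw [smul_eq_mul, smul_eq_mul, Complex.mul_conj]
  push_cast
  simp

lemma conj_ketbra (U : Matrix (Fin n) (Fin n) ℂ) (x y : Fin n → ℂ) :
    U * ketbra x y * Uᴴ = ketbra (U *ᵥ x) (U *ᵥ y) := by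
  rw [mul_ketbra, ketbra_mul, conjTranspose_conjTranspose]

lemma conj_state (U : Matrix (Fin n) (Fin n) ℂ) (r : Fin n → ℝ) (w : Fin n → Fin n → ℂ) :
    U * (∑ j, (r j : ℂ) • ketbra (w j) (w j)) * Uᴴ
      = ∑ j, (r j : ℂ) • ketbra (U *ᵥ w j) (U *ᵥ w j) := by
  rw [Finset.mul_sum, Finset.sum_mul]
  refine Finset.sum_congr rfl fun j _ => ?_
  rw [Matrix.mul_smul, Matrix.smul_mul, conj_ketbra]

lemma ketbra_smul_left (c : ℂ) (x y : Fin n → ℂ) :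
    ketbra (c • x) y = c • ketbra x y := by
  ext i j; simp [ketbra, vecMulVec_apply]; ring

lemma ketbra_smul_right (c : ℂ) (x y : Fin n → ℂ) :
    ketbra x (c • y) = (starRingEnd ℂ c) • ketbra x y := by
  ext i j; simp [ketbra, vecMulVec_apply]; ring



lemma exp_unit (t : ℝ) :
    Complex.exp ((t : ℂ) * Complex.I) * (starRingEnd ℂ) (Complex.exp ((t : ℂ) * Complex.I)) = 1 := by
  rw [← Complex.exp_conj, ← Complex.exp_add]
  simp [Complex.ext_iff]

lemma uphi_conjT (φ : Fin n → ℝ) (v w : Fin n → Fin n → ℂ) :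
    (∑ k, Complex.exp ((φ k : ℂ) * Complex.I) • ketbra (v k) (w k))ᴴ
      = ∑ k, (starRingEnd ℂ) (Complex.exp ((φ k : ℂ) * Complex.I)) • ketbra (w k) (v k) := by
  rw [conjTranspose_sum]
  exact Finset.sum_congr rfl fun k _ => by
    rw [conjTranspose_smul, ketbra_conjT]; rfl

lemma uphi_unitary {v w : Fin n → Fin n → ℂ} (hv : ONFam v) (hw : ONFam w) (φ : Fin n → ℝ) :
    (∑ k, Complex.exp ((φ k : ℂ) * Complex.I) • ketbra (v k) (w k))
      ∈ Matrix.unitaryGroup (Fin n) ℂ := by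
  rw [Matrix.mem_unitaryGroup_iff, Matrix.star_eq_conjTranspose, uphi_conjT]
  set e : Fin n → ℂ := fun k => Complex.exp ((φ k : ℂ) * Complex.I) with he
  have expand : (∑ k, e k • ketbra (v k) (w k)) * (∑ l, (starRingEnd ℂ) (e l) • ketbra (w l) (v l))
      = ∑ k, ∑ l, ((e k * (starRingEnd ℂ) (e l)) * (star (w k) ⬝ᵥ w l)) • ketbra (v k) (v l) := by
    rw [Finset.sum_mul]
    refine Finset.sum_congr rfl fun k _ => ?_
    rw [Finset.mul_sum]
    refine Finset.sum_congr rfl fun l _ => ?_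
    rw [Matrix.smul_mul, Matrix.mul_smul, ketbra_mul_ketbra, smul_smul, smul_smul, mul_assoc]
  rw [expand, ← onfam_complete hv]
  refine Finset.sum_congr rfl fun k _ => ?_
  rw [Finset.sum_eq_single k]
  · rw [hw k k, if_pos rfl, mul_one]
    simp only [he]
    rw [exp_unit, one_smul]
  · intro l _ hl
    rw [hw k l, if_neg (Ne.symm hl), mul_zero, zero_smul]
  · simp

lemma uphi_mulVec {v w : Fin n → Fin n → ℂ} (hw : ONFam w) (φ : Fin n → ℝ) (j : Fin n) :
    (∑ k, Complex.exp ((φ k : ℂ) * Complex.I) • ketbra (v k) (w k)) *ᵥ w j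
      = Complex.exp ((φ j : ℂ) * Complex.I) • v j := by
  have hs : (∑ k, Complex.exp ((φ k : ℂ) * Complex.I) • ketbra (v k) (w k)) *ᵥ w j
      = ∑ k, Complex.exp ((φ k : ℂ) * Complex.I) • (ketbra (v k) (w k) *ᵥ w j) := by
    ext i
    simp only [mulVec, dotProduct, Matrix.sum_apply, Finset.sum_apply, Pi.smul_apply,
      Matrix.smul_apply, smul_eq_mul, Finset.sum_mul, Finset.mul_sum]
    rw [Finset.sum_comm]
    refine Finset.sum_congr rfl fun k _ => Finset.sum_congr rfl fun m _ => by ring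
  rw [hs]
  rw [Finset.sum_eq_single j]
  · rw [ketbra_mulVec, hw j j]; simp
  · intro l _ hl
    rw [ketbra_mulVec, hw l j, if_neg hl]
    simp
  · simp

end Aux

/-- the ergotropy equals `∑_{k,j} r_j (|⟨ε_k|r_j⟩|² - δ_{jk}) ε_k ≥ 0`, and the
maximum is attained by any unitary of the form `U = ∑ₖ e^{iφₖ} |εₖ⟩⟨rₖ|`. -/
theorem stmt19 {dS : ℕ}
    (ε : Fin dS → ℝ) (hε : StrictMono ε)
    (v : Fin dS → Fin dS → ℂ) (hv : ONFam v)
    (ρ : Matrix (Fin dS) (Fin dS) ℂ) (hρ : IsDensity ρ)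
    (rval : Fin dS → ℝ) (rvec : Fin dS → Fin dS → ℂ)
    (hrvec : ONFam rvec) (hdec : Antitone rval)
    (hspec : ρ = ∑ j, (rval j : ℂ) • ketbra (rvec j) (rvec j)) :
    IsGreatest {x : ℝ | ∃ U ∈ Matrix.unitaryGroup (Fin dS) ℂ,
        x = ((ham ε v * ρ).trace).re - ((ham ε v * (U * ρ * Uᴴ)).trace).re}
      (∑ k, ∑ j, rval j * (Complex.normSq (star (v k) ⬝ᵥ rvec j) -
        if j = k then 1 else 0) * ε k) ∧
    0 ≤ ∑ k, ∑ j, rval j * (Complex.normSq (star (v k) ⬝ᵥ rvec j) -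
        if j = k then 1 else 0) * ε k ∧
    ∀ φ : Fin dS → ℝ,
      (∑ k, Complex.exp ((φ k : ℂ) * Complex.I) • ketbra (v k) (rvec k))
        ∈ Matrix.unitaryGroup (Fin dS) ℂ ∧
      ((ham ε v * ρ).trace).re -
        ((ham ε v * ((∑ k, Complex.exp ((φ k : ℂ) * Complex.I) • ketbra (v k) (rvec k)) * ρ *
          (∑ k, Complex.exp ((φ k : ℂ) * Complex.I) • ketbra (v k) (rvec k))ᴴ)).trace).re
      = ∑ k, ∑ j, rval j * (Complex.normSq (star (v k) ⬝ᵥ rvec j) -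
          if j = k then 1 else 0) * ε k := by
  classical
  have hswap : ∀ (x y : Fin dS → ℂ),
      Complex.normSq (star x ⬝ᵥ y) = Complex.normSq (star y ⬝ᵥ x) := by
    intro x y; rw [star_dot_comm]; exact Complex.normSq_conj _
  have hT : ((ham ε v * ρ).trace).re
      = ∑ k, ∑ j, ε k * rval j * Complex.normSq (star (v k) ⬝ᵥ rvec j) := by
    rw [hspec]; exact trace_ham_mix ε rval v rvec
  have hEeq : (∑ k, ∑ j, rval j * (Complex.normSq (star (v k) ⬝ᵥ rvec j) -
        if j = k then 1 else 0) * ε k)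
      = (∑ k, ∑ j, ε k * rval j * Complex.normSq (star (v k) ⬝ᵥ rvec j)) -
        ∑ k, ε k * rval k := by
    rw [← Finset.sum_sub_distrib]
    refine Finset.sum_congr rfl fun k _ => ?_
    have hd : ε k * rval k = ∑ j, rval j * (if j = k then 1 else 0) * ε k := by
      rw [Finset.sum_eq_single k]
      · simp [mul_comm]
      · intro b _ hb; simp [hb]
      · simp
    rw [hd, ← Finset.sum_sub_distrib]
    exact Finset.sum_congr rfl fun j _ => by ring
  have hgen : ∀ U : Matrix (Fin dS) (Fin dS) ℂ,
      ((ham ε v * (U * ρ * Uᴴ)).trace).re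
        = ∑ k, ∑ j, ε k * rval j * Complex.normSq (star (v k) ⬝ᵥ (U *ᵥ rvec j)) := by
    intro U
    rw [hspec, conj_state]
    exact trace_ham_mix ε rval v _
  have hattain : ∀ φ : Fin dS → ℝ,
      ((ham ε v * ρ).trace).re -
        ((ham ε v * ((∑ k, Complex.exp ((φ k : ℂ) * Complex.I) • ketbra (v k) (rvec k)) * ρ *
          (∑ k, Complex.exp ((φ k : ℂ) * Complex.I) • ketbra (v k) (rvec k))ᴴ)).trace).re
      = ∑ k, ∑ j, rval j * (Complex.normSq (star (v k) ⬝ᵥ rvec j) -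
          if j = k then 1 else 0) * ε k := by
    intro φ
    have hUρ : (∑ k, Complex.exp ((φ k : ℂ) * Complex.I) • ketbra (v k) (rvec k)) * ρ *
          (∑ k, Complex.exp ((φ k : ℂ) * Complex.I) • ketbra (v k) (rvec k))ᴴ
        = ∑ j, (rval j : ℂ) • ketbra (v j) (v j) := by
      rw [hspec, conj_state]
      refine Finset.sum_congr rfl fun j _ => ?_
      rw [uphi_mulVec hrvec, ketbra_smul_left, ketbra_smul_right, smul_smul, smul_smul,
        mul_assoc, exp_unit, mul_one]
    have hpass : ((ham ε v * (∑ j, (rval j : ℂ) • ketbra (v j) (v j))).trace).re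
        = ∑ k, ε k * rval k := by
      rw [trace_ham_mix]
      refine Finset.sum_congr rfl fun k _ => ?_
      rw [Finset.sum_eq_single k]
      · rw [hv k k, if_pos rfl]; simp
      · intro j _ hj; rw [hv k j, if_neg (Ne.symm hj)]; simp
      · simp
    rw [hUρ, hpass, hT, hEeq]
  have hub : ∀ x ∈ {x : ℝ | ∃ U ∈ Matrix.unitaryGroup (Fin dS) ℂ,
        x = ((ham ε v * ρ).trace).re - ((ham ε v * (U * ρ * Uᴴ)).trace).re},
      x ≤ ∑ k, ∑ j, rval j * (Complex.normSq (star (v k) ⬝ᵥ rvec j) -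
        if j = k then 1 else 0) * ε k := by
    rintro x ⟨U, hU, rfl⟩
    rw [hEeq, hT, hgen U]
    have hwON : ONFam (fun j => U *ᵥ rvec j) := onfam_mulVec hU hrvec
    set Bmat : Matrix (Fin dS) (Fin dS) ℝ :=
      Matrix.of fun k j => Complex.normSq (star (v k) ⬝ᵥ (U *ᵥ rvec j)) with hB
    have hBmem : Bmat ∈ doublyStochastic ℝ (Fin dS) := by
      rw [mem_doublyStochastic_iff_sum]
      refine ⟨fun i j => Complex.normSq_nonneg _, fun i => sum_normSq_eq_one hv hwON i,
        fun j => ?_⟩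
      have : ∀ i, Bmat i j = Complex.normSq (star (U *ᵥ rvec j) ⬝ᵥ v i) := by
        intro i; exact hswap _ _
      rw [Finset.sum_congr rfl fun i _ => this i]
      exact sum_normSq_eq_one hwON hv j
    have hkey : ∑ k, ε k * rval k
        ≤ ∑ k, ∑ j, ε k * rval j * Complex.normSq (star (v k) ⬝ᵥ (U *ᵥ rvec j)) := by
      calc ∑ k, ε k * rval k ≤ ∑ k, ∑ j, Bmat k j * (ε k * rval j) :=
            ds_ineq ε rval hε.monotone hdec Bmat hBmem
        _ = _ := by
            refine Finset.sum_congr rfl fun k _ => Finset.sum_congr rfl fun j _ => ?_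
            simp only [hB, Matrix.of_apply]
            ring
    linarith
  refine ⟨⟨⟨_, uphi_unitary hv hrvec 0, (hattain 0).symm⟩, hub⟩, ?_,
    fun φ => ⟨uphi_unitary hv hrvec φ, hattain φ⟩⟩
  have h0 : (0 : ℝ) ∈ {x : ℝ | ∃ U ∈ Matrix.unitaryGroup (Fin dS) ℂ,
      x = ((ham ε v * ρ).trace).re - ((ham ε v * (U * ρ * Uᴴ)).trace).re} := by
    refine ⟨1, one_mem _, ?_⟩
    rw [Matrix.conjTranspose_one, Matrix.one_mul, Matrix.mul_one, sub_self]
  exact hub 0 h0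
end Daemonic
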